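/- (Proposition 3, second part.) Suppose there exists an integer t₀ ≥ 1 with q_{t₀} = c. Let a be an integer with 0 ≤ a ≤ s and a < t₀, and suppose t₀ + s − a ≤ T. Then t₀ + s − a minimizes f_{(s,a)} over {s + 1, …, T}: for every integer t with s + 1 ≤ t ≤ T, f_{(s,a)}(t₀ + s − a) ≤ f_{(s,a)}(t). In particular the optimal next preventive maintenance time satisfies t_{(s,a)} = t_{(0,0)} + s − a. -/

import Mathlib

open MeasureTheory ProbabilityTheory Real

/-- Proposition 3, second part: Suppose `q_{t₀} = c` for some integer
`t₀ ≥ 1`. If `0 ≤ a ≤ s`, `a < t₀` and `t₀ + s − a ≤ T`, then `t₀ + s − a` minimizes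
`f_{(s,a)}` over `{s + 1, …, T}`; in particular `t_{(s,a)} = t_{(0,0)} + s − a`. -/
theorem optimal_time_shift_by_age
    {Ω : Type*} [MeasureSpace Ω] [IsProbabilityMeasure (ℙ : Measure Ω)]
    (θ β g h m : ℝ) (hθ : 0 < θ) (hβ : 1 < β) (hg : 0 ≤ g) (hh : 0 ≤ h) (hm : 0 ≤ m)
    (L : Ω → ℕ) (hmeasL : Measurable L) (hposL : ∀ ω, 1 ≤ L ω)
    (hsurvL : ∀ u : ℕ, ℙ {ω | u < L ω} = ENNReal.ofReal (Real.exp (-θ * (u : ℝ) ^ β)))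
    (q : ℕ → ℝ)
    (hq : ∀ t : ℕ, 1 ≤ t →
      q t = ((1 - Real.exp (-θ * (t : ℝ) ^ β)) * g
            + Real.exp (-θ * (t : ℝ) ^ β) * (h + m * t))
          / ((∑ k ∈ Finset.Icc 1 t,
              (Real.exp (-θ * ((k : ℝ) - 1) ^ β) - Real.exp (-θ * (k : ℝ) ^ β)) * (k : ℝ))
            + Real.exp (-θ * (t : ℝ) ^ β) * (t : ℝ)))
    (c : ℝ) (hc : c = ⨅ t : ℕ, q (t + 1))
    (T s : ℕ) (hT : 1 ≤ T) (hsT : s < T)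
    (a : ℕ)
    (La : Ω → ℕ) (hmeasLa : Measurable La) (hposLa : ∀ ω, 1 ≤ La ω)
    (hsurvLa : ∀ u : ℕ, ℙ {ω | u < La ω}
      = ENNReal.ofReal (Real.exp (θ * ((a : ℝ) ^ β - ((a : ℝ) + u) ^ β))))
    (Q : ℕ → ℝ → ℝ)
    (hQ : ∀ t : ℕ, s + 1 ≤ t → t ≤ T → ∀ u : ℝ,
      Q t u = if u ≤ (t : ℝ) then g + ((T : ℝ) - u) * c
              else h + ((t : ℝ) - (s : ℝ) + (a : ℝ)) * m + ((T : ℝ) - (t : ℝ)) * c)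
    (f : ℕ → ℝ)
    (hf : ∀ t : ℕ, f t = ∫ ω, Q t ((s : ℝ) + (La ω : ℝ)) ∂ℙ)
    (t₀ : ℕ) (ht₀ : 1 ≤ t₀) (hqt₀ : q t₀ = c)
    (has : a ≤ s) (hat₀ : a < t₀) (ht₀T : t₀ + s - a ≤ T) :
    ∀ t : ℕ, s + 1 ≤ t → t ≤ T → f (t₀ + s - a) ≤ f t := by
  intro t hst htT
  -- notation
  set E : ℕ → ℝ := fun k => Real.exp (-θ * (k : ℝ) ^ β) with hEdef
  set Dn : ℕ → ℝ := fun k => ∑ j ∈ Finset.range k, E j with hDdef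
  set Nn : ℕ → ℝ := fun k => g + E k * (h + m * k - g) with hNdef
  have hEpos : ∀ k, 0 < E k := fun k => Real.exp_pos _
  have hEle1 : ∀ k : ℕ, E k ≤ 1 := by
    intro k
    apply Real.exp_le_one_iff.mpr
    have h1 : (0:ℝ) ≤ (k:ℝ) ^ β := Real.rpow_nonneg (by positivity) β
    nlinarith
  have hDpos : ∀ k, 1 ≤ k → 0 < Dn k := by
    intro k hk
    apply Finset.sum_pos (fun j _ => hEpos j)
    exact ⟨0, Finset.mem_range.mpr hk⟩
  -- the denominator in `hq` equals `Dn`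
  have hsum_id : ∀ k : ℕ,
      (∑ j ∈ Finset.Icc 1 k,
        (Real.exp (-θ * ((j : ℝ) - 1) ^ β) - Real.exp (-θ * (j : ℝ) ^ β)) * (j : ℝ))
      + Real.exp (-θ * (k : ℝ) ^ β) * (k : ℝ) = Dn k := by
    intro k
    induction k with
    | zero => simp [hDdef]
    | succ k ih =>
      rw [Finset.sum_Icc_succ_top (by omega : 1 ≤ k + 1)]
      have hc1 : ((k + 1 : ℕ) : ℝ) - 1 = (k : ℝ) := by push_cast; ring
      rw [hc1]
      have hstep : Dn (k+1) = Dn k + E k := by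
        simp only [hDdef]
        rw [Finset.sum_range_succ]
      rw [hstep, ← ih]
      simp only [hEdef]
      push_cast
      ring
  have hq' : ∀ k, 1 ≤ k → q k = Nn k / Dn k := by
    intro k hk
    rw [hq k hk, hsum_id k]
    congr 1
    simp only [hNdef, hEdef]
    ring
  have hNnonneg : ∀ k : ℕ, 0 ≤ Nn k := by
    intro k
    have h1 : Nn k = (1 - E k) * g + E k * (h + m * k) := by simp only [hNdef]; ring
    rw [h1]
    have h2 : (0:ℝ) ≤ (1 - E k) * g := mul_nonneg (by linarith [hEle1 k]) hg
    have h3 : (0:ℝ) ≤ E k * (h + m * k) := by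
      apply mul_nonneg (hEpos k).le
      positivity
    linarith
  have hcle : ∀ k, 1 ≤ k → c ≤ q k := by
    intro k hk
    rw [hc]
    have hbdd : BddBelow (Set.range fun t : ℕ => q (t + 1)) := by
      refine ⟨0, ?_⟩
      rintro x ⟨j, rfl⟩
      show (0:ℝ) ≤ q (j + 1)
      rw [hq' (j+1) (by omega)]
      exact div_nonneg (hNnonneg _) (hDpos _ (by omega)).le
    have h2 : k - 1 + 1 = k := by omega
    simpa [h2] using ciInf_le hbdd (k - 1)
  have hkey : ∀ k, 1 ≤ k → c * Dn k ≤ Nn k := by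
    intro k hk
    have h1 := hcle k hk
    rw [hq' k hk] at h1
    exact (le_div_iff₀ (hDpos k hk)).mp h1
  have hkey0 : Nn t₀ = c * Dn t₀ := by
    have h1 := hq' t₀ ht₀
    rw [hqt₀] at h1
    rw [eq_comm, div_eq_iff (hDpos t₀ ht₀).ne'] at h1
    linarith [h1]
  -- survival probabilities of La
  set p : ℕ → ℝ := fun j => Real.exp (θ * ((a : ℝ) ^ β - ((a : ℝ) + j) ^ β)) with hpdef
  have hPj : ∀ j : ℕ, (ℙ {ω | j < La ω}).toReal = p j := by
    intro j
    rw [hsurvLa j]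
    exact ENNReal.toReal_ofReal (Real.exp_pos _).le
  -- the truncated value as a sum of indicators
  have hmin : ∀ (ω : Ω) (k : ℕ),
      ∑ j ∈ Finset.range k, ({ω' : Ω | j < La ω'}.indicator (fun _ => (1:ℝ)) ω)
        = ((min (La ω) k : ℕ) : ℝ) := by
    intro ω k
    induction k with
    | zero => simp
    | succ k ih =>
      rw [Finset.sum_range_succ, ih]
      by_cases hk : k < La ω
      · rw [Set.indicator_of_mem (show ω ∈ {ω' : Ω | k < La ω'} from hk)]
        have hm1 : min (La ω) (k+1) = min (La ω) k + 1 := by omega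
        rw [hm1]
        push_cast
        ring
      · rw [Set.indicator_of_notMem (show ω ∉ {ω' : Ω | k < La ω'} from hk)]
        have hm1 : min (La ω) (k+1) = min (La ω) k := by omega
        rw [hm1]
        ring
  -- closed form for f (s + n)
  have hf_eval : ∀ n : ℕ, 1 ≤ n → s + n ≤ T →
      f (s + n) = (g + ((T : ℝ) - s) * c)
        + (h - g + ((n : ℝ) + a) * m) * p n
        - c * ∑ j ∈ Finset.range n, p j := by
    intro n hn hnT
    rw [hf]
    have hptw : ∀ ω, Q (s + n) ((s : ℝ) + (La ω : ℝ)) =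
        (g + ((T : ℝ) - s) * c)
        + ({ω' : Ω | n < La ω'}.indicator (fun _ => h - g + ((n : ℝ) + a) * m) ω)
        - c * ∑ j ∈ Finset.range n, ({ω' : Ω | j < La ω'}.indicator (fun _ => (1:ℝ)) ω) := by
      intro ω
      rw [hQ (s + n) (by omega) hnT, hmin ω n]
      by_cases hcase : La ω ≤ n
      · have h1 : ((s : ℝ) + (La ω : ℝ)) ≤ ((s + n : ℕ) : ℝ) := by
          have : (La ω : ℝ) ≤ (n : ℝ) := by exact_mod_cast hcase
          push_cast
          linarith
        rw [if_pos h1]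
        have h2 : min (La ω) n = La ω := min_eq_left hcase
        have h3 : ({ω' : Ω | n < La ω'}.indicator (fun _ => h - g + ((n : ℝ) + a) * m) ω) = 0 := by
          apply Set.indicator_of_notMem
          simp only [Set.mem_setOf_eq, not_lt]
          exact hcase
        rw [h2, h3]
        push_cast
        ring
      · have h1 : ¬ ((s : ℝ) + (La ω : ℝ)) ≤ ((s + n : ℕ) : ℝ) := by
          have : (n : ℝ) < (La ω : ℝ) := by exact_mod_cast (by omega : n < La ω)
          push_cast
          linarith
        rw [if_neg h1]
        have h2 : min (La ω) n = n := min_eq_right (by omega)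
        have h3 : ({ω' : Ω | n < La ω'}.indicator (fun _ => h - g + ((n : ℝ) + a) * m) ω)
            = h - g + ((n : ℝ) + a) * m := by
          apply Set.indicator_of_mem
          show n < La ω
          omega
        rw [h2, h3]
        push_cast
        ring
    rw [integral_congr_ae (Filter.Eventually.of_forall hptw)]
    have hms : ∀ j : ℕ, MeasurableSet {ω' : Ω | j < La ω'} := by
      intro j
      exact hmeasLa measurableSet_Ioi
    have hIA : Integrable (fun ω =>
        ({ω' : Ω | n < La ω'}.indicator (fun _ => h - g + ((n : ℝ) + a) * m) ω)) ℙ :=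
      (integrable_const _).indicator (hms n)
    have hIj : ∀ j : ℕ,
        Integrable (fun ω => ({ω' : Ω | j < La ω'}.indicator (fun _ => (1:ℝ)) ω)) ℙ :=
      fun j => (integrable_const 1).indicator (hms j)
    have hIS : Integrable (fun ω => c * ∑ j ∈ Finset.range n,
        ({ω' : Ω | j < La ω'}.indicator (fun _ => (1:ℝ)) ω)) ℙ :=
      (integrable_finset_sum _ (fun j _ => hIj j)).const_mul c
    have hI1 : Integrable (fun ω => (g + ((T : ℝ) - s) * c)
        + ({ω' : Ω | n < La ω'}.indicator (fun _ => h - g + ((n : ℝ) + a) * m) ω)) ℙ :=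
      (integrable_const _).add hIA
    rw [integral_sub hI1 hIS]
    rw [integral_add (integrable_const _) hIA]
    rw [integral_const]
    rw [MeasureTheory.integral_const_mul]
    rw [MeasureTheory.integral_finset_sum _ (fun j _ => hIj j)]
    have hind : ∀ (j : ℕ) (K' : ℝ),
        ∫ ω, ({ω' : Ω | j < La ω'}.indicator (fun _ => K') ω) ∂ℙ = p j * K' := by
      intro j K'
      rw [MeasureTheory.integral_indicator_const K' (hms j), measureReal_def, hPj j, smul_eq_mul]
    simp only [hind, mul_one, measureReal_def, measure_univ, ENNReal.toReal_one, smul_eq_mul, one_mul]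
    ring
  -- relating p-sums with Dn/Nn via shift by a
  have hEa : ∀ j : ℕ, p j = Real.exp (θ * (a : ℝ) ^ β) * E (a + j) := by
    intro j
    simp only [hpdef, hEdef, ← Real.exp_add]
    congr 1
    push_cast
    ring
  have hDshift : ∀ k : ℕ, ∑ j ∈ Finset.range k, E (a + j) = Dn (a + k) - Dn a := by
    intro k
    have hstep : Dn (a + k) = Dn a + ∑ j ∈ Finset.range k, E (a + j) := by
      induction k with
      | zero => simp
      | succ k ih =>
        rw [← Nat.add_assoc]
        simp only [hDdef] at ih ⊢
        rw [Finset.sum_range_succ, ih, Finset.sum_range_succ]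
        ring
    linarith [hstep]
  set Ea : ℝ := Real.exp (θ * (a : ℝ) ^ β) with hEadef
  have hEapos : 0 < Ea := Real.exp_pos _
  have hG : ∀ k : ℕ,
      (h - g + ((k : ℝ) + a) * m) * p k - c * ∑ j ∈ Finset.range k, p j
      = Ea * (Nn (a + k) - c * Dn (a + k)) + Ea * (c * Dn a - g) := by
    intro k
    have h1 : ∑ j ∈ Finset.range k, p j = Ea * (Dn (a + k) - Dn a) := by
      rw [← hDshift k, Finset.mul_sum]
      exact Finset.sum_congr rfl (fun j _ => hEa j)
    rw [h1, hEa k]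
    have h2 : Nn (a + k) = g + E (a + k) * (h + m * ((a : ℝ) + k) - g) := by
      simp only [hNdef]
      push_cast
      ring
    rw [h2]
    ring
  -- main comparison
  set n : ℕ := t - s with hn
  have htn : t = s + n := by omega
  set n₀ : ℕ := t₀ - a with hn0
  have hts : t₀ + s - a = s + n₀ := by omega
  have han0 : a + n₀ = t₀ := by omega
  rw [htn, hts]
  rw [hf_eval n₀ (by omega) (by omega), hf_eval n (by omega) (by omega)]
  have hGn := hG n
  have hGn0 := hG n₀
  rw [han0] at hGn0
  have hpos : 0 ≤ Nn (a + n) - c * Dn (a + n) := by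
    have := hkey (a + n) (by omega)
    linarith
  have hzero : Nn t₀ - c * Dn t₀ = 0 := by rw [hkey0]; ring
  nlinarith [hGn, hGn0, hEapos, hpos, hzero]
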